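/- Let A be a (not necessarily commutative) ring and let W : ℕ × ℕ → A be any family of elements with W(n,n) = 1 for all n ≥ 0. Define S_0 := 1 and, for n ≥ 1, S_n := P_n(a), the (1,n) quasideterminant polynomial applied to the entries a_{ij} := −W(n−i+1, n−j) for 1 ≤ i ≤ j ≤ n. Then for every n ≥ 1, Σ_{k=0}^{n} W(n,k) · S_k = 0. (Applied to the rank polynomials W_{n,k} of a noncommutative uniform family of posets, this says the antipode of the associated incidence Hopf algebra is S(x_n) = |M_n|_{1n}, the quasideterminant of the matrix M_n with entries W_{n−i+1,n−j}.) -/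

import Mathlib

open Finset

/-- `chainProd a n i [j₁, …, jₖ] = a i j₁ * a (j₁+1) j₂ * ⋯ * a (jₖ+1) n`. -/
noncomputable def chainProd {A : Type*} [Ring A] (a : ℕ → ℕ → A) (n : ℕ) : ℕ → List ℕ → A
  | i, [] => a i n
  | i, j :: l => a i j * chainProd a n (j + 1) l

/-- The `(1,n)` quasideterminant polynomial `P_n(a)`, with `P_0 = 1`. -/
noncomputable def quasiP {A : Type*} [Ring A] (a : ℕ → ℕ → A) : ℕ → A
  | 0 => 1
  | n + 1 => ∑ s ∈ (Finset.Icc 1 n).powerset, chainProd a (n + 1) 1 (s.sort (· ≤ ·))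

section Aux
variable {A : Type*} [Ring A]

noncomputable def Gp (a : ℕ → ℕ → A) (N i i' m : ℕ) : A :=
  ∑ s ∈ (Finset.Icc i' m).powerset, chainProd a N i (s.sort (· ≤ ·))

lemma quasiP_succ (a : ℕ → ℕ → A) (m : ℕ) : quasiP a (m + 1) = Gp a (m + 1) 1 1 m := rfl

lemma Gp_empty {i' m : ℕ} (h : m < i') (a : ℕ → ℕ → A) (N i : ℕ) : Gp a N i i' m = a i N := by
  rw [Gp, Finset.Icc_eq_empty (by omega), Finset.powerset_empty, Finset.sum_singleton,
    Finset.sort_empty]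
  rfl

lemma sort_image_add (t : Finset ℕ) (c : ℕ) :
    ((t.image (· + c)).sort (· ≤ ·)) = (t.sort (· ≤ ·)).map (· + c) := by
  refine (fun hp h1 h2 => List.Perm.eq_of_pairwise' h1 h2 hp) ?_ (Finset.pairwise_sort _ _) ?_
  · rw [← Multiset.coe_eq_coe, Finset.sort_eq, ← Multiset.map_coe, Finset.sort_eq,
      Finset.image_val, Multiset.dedup_eq_self.2 (t.nodup.map (add_left_injective c))]
  · exact List.Pairwise.map _ (fun a b h => by omega) (Finset.pairwise_sort _ _)

lemma chainProd_shift (a : ℕ → ℕ → A) (N c : ℕ) :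
    ∀ (l : List ℕ) (i : ℕ), chainProd (fun p q => a (p + c) (q + c)) N i l
      = chainProd a (N + c) (i + c) (l.map (· + c))
  | [], i => rfl
  | j :: l, i => by
    simp only [chainProd, List.map_cons, chainProd_shift a N c l (j + 1)]
    have : j + c + 1 = j + 1 + c := by omega
    rw [this]

lemma Gp_shift (a : ℕ → ℕ → A) (N i i' m c : ℕ) :
    Gp a (N + c) (i + c) (i' + c) (m + c) = Gp (fun p q => a (p + c) (q + c)) N i i' m := by
  rw [Gp, Gp]
  symm
  refine Finset.sum_bij' (fun t _ => t.image (· + c)) (fun s _ => s.image (· - c))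
    ?_ ?_ ?_ ?_ ?_
  · intro t ht
    rw [Finset.mem_powerset] at ht ⊢
    rw [← image_add_right_Icc]
    exact Finset.image_subset_image ht
  · intro s hs
    rw [Finset.mem_powerset] at hs ⊢
    intro x hx
    obtain ⟨y, hy, rfl⟩ := Finset.mem_image.1 hx
    have := hs hy
    rw [Finset.mem_Icc] at this ⊢
    omega
  · intro t ht
    rw [Finset.image_image]
    have : ((· - c) ∘ (· + c) : ℕ → ℕ) = id := by funext x; simp
    rw [this, Finset.image_id]
  · intro s hs
    rw [Finset.mem_powerset] at hs
    ext x
    simp only [Finset.mem_image]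
    constructor
    · rintro ⟨y, ⟨z, hz, rfl⟩, rfl⟩
      have := hs hz
      rw [Finset.mem_Icc] at this
      have : z - c + c = z := by omega
      rwa [this]
    · intro hx
      have := hs hx
      rw [Finset.mem_Icc] at this
      exact ⟨x - c, ⟨x, hx, rfl⟩, by omega⟩
  · intro t ht
    rw [sort_image_add, chainProd_shift]

lemma Gp_succ (a : ℕ → ℕ → A) (N i : ℕ) {i' m : ℕ} (h : i' ≤ m) :
    Gp a N i i' m = Gp a N i (i' + 1) m + a i i' * Gp a N (i' + 1) (i' + 1) m := by
  have hIcc : Finset.Icc i' m = insert i' (Finset.Icc (i' + 1) m) := by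
    rw [Finset.Icc_add_one_left_eq_Ioc, Finset.Ioc_insert_left h]
  have hdisj : Disjoint (Finset.Icc (i' + 1) m).powerset
      ((Finset.Icc (i' + 1) m).powerset.image (insert i')) := by
    rw [Finset.disjoint_left]
    intro s hs hs'
    obtain ⟨t, ht, rfl⟩ := Finset.mem_image.1 hs'
    rw [Finset.mem_powerset] at hs
    have := hs (Finset.mem_insert_self i' t)
    rw [Finset.mem_Icc] at this
    omega
  have hinj : ∀ x ∈ (Finset.Icc (i' + 1) m).powerset, ∀ y ∈ (Finset.Icc (i' + 1) m).powerset,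
      insert i' x = insert i' y → x = y := by
    intro x hx y hy hxy
    rw [Finset.mem_powerset] at hx hy
    have hx' : i' ∉ x := fun hm => by have := hx hm; rw [Finset.mem_Icc] at this; omega
    have hy' : i' ∉ y := fun hm => by have := hy hm; rw [Finset.mem_Icc] at this; omega
    rw [← Finset.erase_insert hx', hxy, Finset.erase_insert hy']
  rw [Gp, hIcc, Finset.powerset_insert, Finset.sum_union hdisj, Finset.sum_image hinj]
  congr 1
  rw [Gp, Finset.mul_sum]
  refine Finset.sum_congr rfl fun t ht => ?_
  rw [Finset.mem_powerset] at ht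
  have h1 : ∀ b ∈ t, i' ≤ b := fun b hb => by
    have := ht hb; rw [Finset.mem_Icc] at this; omega
  have h2 : i' ∉ t := fun hm => by have := ht hm; rw [Finset.mem_Icc] at this; omega
  rw [Finset.sort_insert _ h1 h2]
  rfl

lemma Gp_formula (a : ℕ → ℕ → A) (N m : ℕ) :
    ∀ k i i', m + 1 - i' ≤ k →
      Gp a N i i' m = a i N + ∑ j ∈ Finset.Icc i' m, a i j * Gp a N (j + 1) (j + 1) m := by
  intro k
  induction k with
  | zero =>
    intro i i' h
    rw [Gp_empty (by omega), Finset.Icc_eq_empty (by omega), Finset.sum_empty, add_zero]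
  | succ k ih =>
    intro i i' h
    by_cases hle : i' ≤ m
    · rw [Gp_succ a N i hle, ih i (i' + 1) (by omega)]
      have hIcc : Finset.Icc i' m = insert i' (Finset.Icc (i' + 1) m) := by
        rw [Finset.Icc_add_one_left_eq_Ioc, Finset.Ioc_insert_left hle]
      have h2 : i' ∉ Finset.Icc (i' + 1) m := by simp
      rw [hIcc, Finset.sum_insert h2]
      abel
    · rw [Gp_empty (by omega), Finset.Icc_eq_empty (by omega), Finset.sum_empty, add_zero]

end Aux

theorem key {A : Type*} [Ring A] (W : ℕ → ℕ → A) (hW : ∀ n, W n n = 1)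
    (S : ℕ → A) (hS0 : S 0 = 1)
    (hS : ∀ n, 1 ≤ n → S n = quasiP (fun i j => -W (n - i + 1) (n - j)) n) :
    ∀ n, 1 ≤ n → S n = -∑ k ∈ Finset.range n, W n k * S k := by
  intro n hn
  obtain ⟨m, rfl⟩ : ∃ m, n = m + 1 := ⟨n - 1, by omega⟩
  set a : ℕ → ℕ → A := fun i j => -W (m + 1 - i + 1) (m + 1 - j) with ha
  rw [hS (m + 1) hn, quasiP_succ,
    Gp_formula a (m + 1) m (m + 1) 1 1 (by omega)]
  have hGp : ∀ j ∈ Finset.Icc 1 m, Gp a (m + 1) (j + 1) (j + 1) m = S (m + 1 - j) := by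
    intro j hj
    rw [Finset.mem_Icc] at hj
    set k := m + 1 - j with hk
    obtain ⟨k', hk'⟩ : ∃ k', k = k' + 1 := ⟨k - 1, by omega⟩
    have h1 : m + 1 = k + j := by omega
    have h2 : m = k' + j := by omega
    have h3 : j + 1 = 1 + j := by omega
    rw [h1, h2, h3, Gp_shift]
    have ha' : (fun p q => a (p + j) (q + j)) = fun p q => -W (k - p + 1) (k - q) := by
      funext p q
      rw [ha]
      dsimp only
      have e1 : m + 1 - (p + j) = k - p := by omega
      have e2 : m + 1 - (q + j) = k - q := by omega
      rw [e1, e2]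
    rw [ha', hk', ← quasiP_succ, ← hS (k' + 1) (by omega)]
  rw [Finset.sum_congr rfl fun j hj => by rw [hGp j hj]]
  have hrange : Finset.range (m + 1) = insert 0 (Finset.Icc 1 m) := by
    ext x
    simp only [Finset.mem_range, Finset.mem_insert, Finset.mem_Icc]
    omega
  rw [hrange, Finset.sum_insert (by simp), hS0, mul_one]
  have ha1 : a 1 (m + 1) = -W (m + 1) 0 := by
    rw [ha]
    dsimp only
    rw [show m + 1 - 1 + 1 = m + 1 by omega, Nat.sub_self]
  rw [ha1, neg_add]
  congr 1
  rw [← Finset.sum_neg_distrib]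
  refine Finset.sum_nbij' (fun j => m + 1 - j) (fun k => m + 1 - k) ?_ ?_ ?_ ?_ ?_
  · intro j hj; simp only [Finset.mem_Icc] at hj ⊢; omega
  · intro j hj; simp only [Finset.mem_Icc] at hj ⊢; omega
  · intro j hj; simp only [Finset.mem_Icc] at hj; omega
  · intro j hj; simp only [Finset.mem_Icc] at hj; omega
  · intro j hj
    rw [Finset.mem_Icc] at hj
    rw [ha]
    dsimp only
    rw [show m + 1 - 1 + 1 = m + 1 by omega, neg_mul]

/-- Quasideterminantal antipode formula for noncommutative incidence Hopf algebras:
if `W n n = 1`, `S 0 = 1`, and `S n` is the `(1,n)` quasideterminant polynomial with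
entries `a i j = -W (n-i+1) (n-j)`, then `∑_{k=0}^{n} W n k · S k = 0` for every `n ≥ 1`. -/
theorem stmt18 {A : Type*} [Ring A] (W : ℕ → ℕ → A) (hW : ∀ n, W n n = 1)
    (S : ℕ → A) (hS0 : S 0 = 1)
    (hS : ∀ n, 1 ≤ n → S n = quasiP (fun i j => -W (n - i + 1) (n - j)) n) :
    ∀ n, 1 ≤ n → ∑ k ∈ Finset.range (n + 1), W n k * S k = 0 := by
  intro n hn
  have h := key W hW S hS0 hS n hn
  rw [Finset.sum_range_succ, hW n, one_mul, h]
  exact add_neg_cancel _
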